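/- Let λ be a nonempty n-core and w the minimal-length coset representative with λ = w∅, and θ the highest root of A_{n−1}. Then n·⟨w^{-1}(ρ/n), θ⟩ = λ_1 + ℓ(λ) + n − 1 = h_{11}^λ + n. -/

import Mathlib

open Finset

namespace Shi

/-- Number of boxes in column `j` (0-indexed) of the partition `lam` with `ℓ` positive parts:
the conjugate partition. -/
def conjP (lam : ℕ → ℕ) (ℓ j : ℕ) : ℕ := ((Finset.range ℓ).filter (fun i => j < lam i)).card

/-- Hook length of the (0-indexed) box `(i, j)` of the partition `lam` having `ℓ` positive
parts. -/
def hookP (lam : ℕ → ℕ) (ℓ i j : ℕ) : ℤ :=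
  (lam i : ℤ) - j + conjP lam ℓ j - i - 1

/-- `lam : ℕ → ℕ` (0-indexed, weakly decreasing, exactly `ℓ` positive parts) is an `n`-core:
no hook length is divisible by `n`. -/
def IsCore (n : ℕ) (lam : ℕ → ℕ) (ℓ : ℕ) : Prop :=
  Antitone lam ∧ (∀ i, 0 < lam i ↔ i < ℓ) ∧
    ∀ i j, i < ℓ → j < lam i → ¬ ((n : ℤ) ∣ hookP lam ℓ i j)

/-- The `k`-th β-number (first column hook length) of `lam`, 0-indexed. -/
def betaP (lam : ℕ → ℕ) (ℓ k : ℕ) : ℤ := (lam k : ℤ) + ℓ - k - 1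

/-- `x` is a bead of the original abacus of `lam`: a negative integer or a β-number. -/
def IsBead (lam : ℕ → ℕ) (ℓ : ℕ) (x : ℤ) : Prop := x < 0 ∨ ∃ k < ℓ, betaP lam ℓ k = x

/-- The vector `ρ = ((n-1)/2, (n-1)/2 - 1, …, (1-n)/2)`, half the sum of positive roots. -/
noncomputable def rhoV (n : ℕ) : Fin n → ℝ := fun i => ((n : ℝ) - 1) / 2 - ((i : ℕ) : ℝ)

/-- `w⁻¹(v)` for the affine transformation `w = t_a ∘ u` (translation by `a` after the
permutation `u`), i.e. `w⁻¹(v) = u⁻¹ · (v - a)`. -/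
noncomputable def winv (n : ℕ) (u : Equiv.Perm (Fin n)) (a : Fin n → ℤ) (v : Fin n → ℝ) : Fin n → ℝ :=
  fun i => v (u i) - (a (u i) : ℝ)

/-- `u` is the minimal length permutation sorting `-a` into antidominant position, i.e.
`a ∘ u` is weakly increasing and ties are broken stably; this is the finite part of the
minimal length coset representative `w = t_a u`. -/
def SortsMin {n : ℕ} (u : Equiv.Perm (Fin n)) (a : Fin n → ℤ) : Prop :=
  ∀ i j : Fin n, i < j → a (u i) < a (u j) ∨ (a (u i) = a (u j) ∧ u i < u j)

/-- `a` is the vector of level numbers of the balanced abacus of `lam`: for some shift `c`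
of the original abacus, the beads on runner `i` occupy exactly the levels `< a i`, and the
balance number is `0`. -/
def BalancedLevels (n : ℕ) (lam : ℕ → ℕ) (ℓ : ℕ) (a : Fin n → ℤ) : Prop :=
  (∑ i, a i) = 0 ∧ ∃ c : ℤ, ∀ i : Fin n, ∀ q : ℤ,
    IsBead lam ℓ (q * n + ((i : ℕ) : ℤ) - c) ↔ q < a i

/-- for a nonempty `n`-core, `n·⟨w⁻¹(ρ/n), θ⟩ = λ_1 + ℓ(λ) + n - 1
= h_{11} + n`. -/
theorem theta_inner (n : ℕ) (hn : 2 ≤ n) (lam : ℕ → ℕ) (ℓ : ℕ) (hne : 0 < ℓ)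
    (hcore : IsCore n lam ℓ) (a : Fin n → ℤ) (hbal : BalancedLevels n lam ℓ a)
    (u : Equiv.Perm (Fin n)) (hu : SortsMin u a) :
    (n : ℝ) * (winv n u a (fun t => rhoV n t / n) ⟨0, by omega⟩ -
        winv n u a (fun t => rhoV n t / n) ⟨n - 1, by omega⟩) =
      (lam 0 : ℝ) + (ℓ : ℝ) + (n : ℝ) - 1 ∧
    (lam 0 : ℝ) + (ℓ : ℝ) + (n : ℝ) - 1 = ((lam 0 : ℝ) + (ℓ : ℝ) - 1) + (n : ℝ) := by
  obtain ⟨hanti, hpos, -⟩ := hcore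
  obtain ⟨-, c, hc⟩ := hbal
  have hn0 : (0:ℕ) < n := by omega
  have hn1 : n - 1 < n := by omega
  -- basic bead facts
  have hlam0 : 0 < lam 0 := (hpos 0).mpr hne
  have hbead0 : ¬ IsBead lam ℓ 0 := by
    rintro (h | ⟨k, hk, hbe⟩)
    · omega
    · have hk1 : 0 < lam k := (hpos k).mpr hk
      unfold betaP at hbe
      omega
  have hbeadtop : IsBead lam ℓ (betaP lam ℓ 0) := Or.inr ⟨0, hne, rfl⟩
  have hnotabove : ∀ y, betaP lam ℓ 0 < y → ¬ IsBead lam ℓ y := by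
    rintro y hy (h | ⟨k, hk, hbe⟩)
    · unfold betaP at hy; omega
    · have hle : lam k ≤ lam 0 := hanti (Nat.zero_le k)
      unfold betaP at hy hbe; omega
  -- decomposition of any integer
  have hdecomp : ∀ y : ℤ, ∃ (i : Fin n) (q : ℤ),
      y = q * (n:ℤ) + ((i : ℕ) : ℤ) - c := by
    intro y
    have h1 : 0 ≤ (y + c) % (n:ℤ) := Int.emod_nonneg _ (by omega)
    have h2 : (y + c) % (n:ℤ) < (n:ℤ) := Int.emod_lt_of_pos _ (by omega)
    refine ⟨⟨((y + c) % (n:ℤ)).toNat, by omega⟩, (y + c) / (n:ℤ), ?_⟩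
    have h3 : ((((y + c) % (n:ℤ)).toNat : ℕ) : ℤ) = (y + c) % (n:ℤ) :=
      Int.toNat_of_nonneg h1
    have h4 := Int.mul_ediv_add_emod (y + c) (n:ℤ)
    have h5 : (y + c) / (n:ℤ) * (n:ℤ) = (n:ℤ) * ((y + c) / (n:ℤ)) := mul_comm _ _
    simp only [Fin.val_mk]
    rw [h3]
    linarith
  -- minimality / maximality of u
  have hmin : ∀ i : Fin n, a (u ⟨0, hn0⟩) < a i ∨
      (a (u ⟨0, hn0⟩) = a i ∧ ((u ⟨0, hn0⟩ : ℕ) ≤ (i : ℕ))) := by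
    intro i
    have hj : u (u.symm i) = i := u.apply_symm_apply i
    rcases eq_or_ne (u.symm i) ⟨0, hn0⟩ with h | h
    · right
      rw [← hj, h]
      exact ⟨rfl, le_refl _⟩
    · have hv : ((u.symm i : Fin n) : ℕ) ≠ 0 := fun hv => h (Fin.ext hv)
      have hlt : (⟨0, hn0⟩ : Fin n) < u.symm i := by
        rw [Fin.lt_def]; simp only [Fin.val_mk]; omega
      rcases hu ⟨0, hn0⟩ (u.symm i) hlt with h1 | ⟨h1, h2⟩
      · left; rwa [hj] at h1
      · right; rw [hj] at h1 h2; exact ⟨h1, le_of_lt (Fin.lt_def.mp h2)⟩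
  have hmax : ∀ i : Fin n, a i < a (u ⟨n - 1, hn1⟩) ∨
      (a i = a (u ⟨n - 1, hn1⟩) ∧ ((i : ℕ) ≤ (u ⟨n - 1, hn1⟩ : ℕ))) := by
    intro i
    have hj : u (u.symm i) = i := u.apply_symm_apply i
    rcases eq_or_ne (u.symm i) ⟨n - 1, hn1⟩ with h | h
    · right
      rw [← hj, h]
      exact ⟨rfl, le_refl _⟩
    · have hv : ((u.symm i : Fin n) : ℕ) ≠ n - 1 := fun hv => h (Fin.ext hv)
      have hv2 : ((u.symm i : Fin n) : ℕ) < n := (u.symm i).isLt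
      have hlt : u.symm i < (⟨n - 1, hn1⟩ : Fin n) := by
        rw [Fin.lt_def]; simp only [Fin.val_mk]; omega
      rcases hu (u.symm i) ⟨n - 1, hn1⟩ hlt with h1 | ⟨h1, h2⟩
      · left; rwa [hj] at h1
      · right; rw [hj] at h1 h2; exact ⟨h1, le_of_lt (Fin.lt_def.mp h2)⟩
  set i0 : Fin n := u ⟨0, hn0⟩ with hi0
  set i1 : Fin n := u ⟨n - 1, hn1⟩ with hi1
  -- c = n * a i0 + i0
  have hnotB : ¬ IsBead lam ℓ (a i0 * (n:ℤ) + ((i0 : ℕ) : ℤ) - c) := by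
    rw [hc i0 (a i0)]; omega
  have hallbelow : ∀ y, y < a i0 * (n:ℤ) + ((i0 : ℕ) : ℤ) - c → IsBead lam ℓ y := by
    intro y hy
    obtain ⟨i, q, rfl⟩ := hdecomp y
    rw [hc i q]
    have hiv : ((i : ℕ) : ℤ) < (n:ℤ) := by exact_mod_cast i.isLt
    have hiv0 : (0:ℤ) ≤ ((i : ℕ) : ℤ) := by positivity
    have hi0v : ((i0 : ℕ) : ℤ) < (n:ℤ) := by exact_mod_cast i0.isLt
    have hy' : q * (n:ℤ) + ((i : ℕ) : ℤ) < a i0 * (n:ℤ) + ((i0 : ℕ) : ℤ) := by linarith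
    have hq : q ≤ a i0 := by
      by_contra hq'
      push_neg at hq'
      have : (a i0 + 1) * (n:ℤ) ≤ q * (n:ℤ) :=
        mul_le_mul_of_nonneg_right (by omega) (by positivity)
      nlinarith
    rcases lt_or_eq_of_le hq with hq | hq
    · rcases hmin i with h | ⟨h, -⟩ <;> omega
    · have hii : ((i : ℕ) : ℤ) < ((i0 : ℕ) : ℤ) := by
        subst hq; linarith
      rcases hmin i with h | ⟨h, h2⟩
      · omega
      · exfalso
        have : ((i0 : ℕ) : ℤ) ≤ ((i : ℕ) : ℤ) := by exact_mod_cast h2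
        omega
  have hc0 : a i0 * (n:ℤ) + ((i0 : ℕ) : ℤ) - c = 0 := by
    rcases lt_trichotomy (a i0 * (n:ℤ) + ((i0 : ℕ) : ℤ) - c) 0 with h | h | h
    · exact absurd (Or.inl h) hnotB
    · exact h
    · exact absurd (hallbelow 0 h) hbead0
  -- top bead
  have hBM : IsBead lam ℓ ((a i1 - 1) * (n:ℤ) + ((i1 : ℕ) : ℤ) - c) := by
    rw [hc i1 (a i1 - 1)]; omega
  have hnoneabove : ∀ y, (a i1 - 1) * (n:ℤ) + ((i1 : ℕ) : ℤ) - c < y →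
      ¬ IsBead lam ℓ y := by
    intro y hy hB
    obtain ⟨i, q, rfl⟩ := hdecomp y
    rw [hc i q] at hB
    have hiv : ((i : ℕ) : ℤ) < (n:ℤ) := by exact_mod_cast i.isLt
    have hiv0 : (0:ℤ) ≤ ((i : ℕ) : ℤ) := by positivity
    have hi1v : ((i1 : ℕ) : ℤ) < (n:ℤ) := by exact_mod_cast i1.isLt
    have hi1v0 : (0:ℤ) ≤ ((i1 : ℕ) : ℤ) := by positivity
    have hy' : (a i1 - 1) * (n:ℤ) + ((i1 : ℕ) : ℤ) < q * (n:ℤ) + ((i : ℕ) : ℤ) := by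
      linarith
    have haB : a i ≤ a i1 := by rcases hmax i with h | ⟨h, -⟩ <;> omega
    have hq : q ≤ a i1 - 1 := by omega
    rcases lt_or_eq_of_le hq with hq | hq
    · have : (q + 1) * (n:ℤ) ≤ (a i1 - 1) * (n:ℤ) :=
        mul_le_mul_of_nonneg_right (by omega) (by positivity)
      nlinarith
    · have hii : ((i1 : ℕ) : ℤ) < ((i : ℕ) : ℤ) := by subst hq; linarith
      rcases hmax i with h | ⟨h, h2⟩
      · omega
      · have : ((i : ℕ) : ℤ) ≤ ((i1 : ℕ) : ℤ) := by exact_mod_cast h2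
        omega
  have hM : (a i1 - 1) * (n:ℤ) + ((i1 : ℕ) : ℤ) - c = betaP lam ℓ 0 := by
    rcases lt_trichotomy ((a i1 - 1) * (n:ℤ) + ((i1 : ℕ) : ℤ) - c) (betaP lam ℓ 0)
      with h | h | h
    · exact absurd hbeadtop (hnoneabove _ h)
    · exact h
    · exact absurd hBM (hnotabove _ h)
  have key : a i1 * (n:ℤ) + ((i1 : ℕ) : ℤ) - (a i0 * (n:ℤ) + ((i0 : ℕ) : ℤ))
      = (lam 0 : ℤ) + (ℓ : ℤ) - 1 + (n:ℤ) := by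
    unfold betaP at hM
    push_cast at hM ⊢
    linarith
  refine ⟨?_, by ring⟩
  have hnR : (n:ℝ) ≠ 0 := by positivity
  have keyR : (a i1 : ℝ) * (n:ℝ) + ((i1 : ℕ) : ℝ) - ((a i0 : ℝ) * (n:ℝ) + ((i0 : ℕ) : ℝ))
      = (lam 0 : ℝ) + (ℓ : ℝ) - 1 + (n:ℝ) := by exact_mod_cast key
  simp only [winv, rhoV, ← hi0, ← hi1]
  field_simp
  linear_combination 2 * keyR


end Shi
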